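/- A binary relation ⪰ on a set C of Savage acts satisfies extended statewise cancellation if and only if it has a constructive subjective-expected-utility representation with a single utility function: there exist a finite nonempty state space S', a finite nonempty outcome space O', a map h : S' → S, a map g : S' × O → O', a function u : O' → ℝ, and a nonempty set P of probability distributions p : S' → [0,1] (with ∑_{s'∈S'} p(s') = 1) such that for all a, b ∈ C: a ⪰ b if and only if for every p ∈ P, ∑_{s'∈S'} p(s')·u(g(s', a(h(s')))) ≥ ∑_{s'∈S'} p(s')·u(g(s', b(h(s')))). Moreover, if ⪰ is in addition complete (for all a, b ∈ C, a ⪰ b or b ⪰ a), then P can be chosen to be a singleton. -/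

import Mathlib

/-- Extended statewise cancellation for a relation on a set of Savage acts. -/
def ExtStatewiseCancel {S O : Type*} (C : Set (S → O)) (R : (S → O) → (S → O) → Prop) : Prop :=
  ∀ (n : ℕ) (a b : Fin (n + 1) → S → O),
    (∀ i, a i ∈ C) → (∀ i, b i ∈ C) →
    (∀ s : S, ((List.ofFn fun i => a i s : List O) : Multiset O)
            = ((List.ofFn fun i => b i s : List O) : Multiset O)) →
    (∃ k, k ≤ n ∧ (∀ i : Fin (n + 1), (i : ℕ) < k → R (a i) (b i)) ∧
      (∀ i : Fin (n + 1), k ≤ (i : ℕ) → a i = a (Fin.last n) ∧ b i = b (Fin.last n))) →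
    R (b (Fin.last n)) (a (Fin.last n))

namespace SEUAux

variable {ι : Type*} [Fintype ι]

/-- dot product over ℚ -/
def dot (x y : ι → ℚ) : ℚ := ∑ i, x i * y i

lemma dot_sub (y a b : ι → ℚ) : dot y (a - b) = dot y a - dot y b := by
  simp [dot, mul_sub, Finset.sum_sub_distrib]

lemma dot_smul (y : ι → ℚ) (c : ℚ) (a : ι → ℚ) : dot y (c • a) = c * dot y a := by
  simp only [dot, Pi.smul_apply, smul_eq_mul, Finset.mul_sum]
  exact Finset.sum_congr rfl (fun i _ => by ring)

lemma dot_comm (x y : ι → ℚ) : dot x y = dot y x := by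
  simp only [dot]; exact Finset.sum_congr rfl (fun i _ => mul_comm _ _)

lemma dot_sub_left (a b y : ι → ℚ) : dot (a - b) y = dot a y - dot b y := by
  rw [dot_comm, dot_sub, dot_comm a y, dot_comm b y]

lemma dot_smul_left (c : ℚ) (a y : ι → ℚ) : dot (c • a) y = c * dot a y := by
  rw [dot_comm, dot_smul, dot_comm]

lemma dot_sum (y : ι → ℚ) {n : ℕ} (f : Fin n → ι → ℚ) :
    dot y (∑ j, f j) = ∑ j, dot y (f j) := by
  simp only [dot, Finset.sum_apply, Finset.mul_sum]
  rw [Finset.sum_comm]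

/-- Farkas' lemma over ℚ. -/
theorem farkas : ∀ (n : ℕ) (E : Fin n → ι → ℚ) (v : ι → ℚ),
    (∃ c : Fin n → ℚ, (∀ j, 0 ≤ c j) ∧ v = ∑ j, c j • E j) ∨
    (∃ y : ι → ℚ, (∀ j, 0 ≤ dot y (E j)) ∧ dot y v < 0) := by
  intro n
  induction n with
  | zero =>
    intro E v
    by_cases hv : v = 0
    · exact Or.inl ⟨fun j => 0, fun j => le_refl _, by simp [hv]⟩
    · refine Or.inr ⟨-v, fun j => j.elim0, ?_⟩
      obtain ⟨i, hi⟩ : ∃ i, v i ≠ 0 := by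
        by_contra hcon; push_neg at hcon; exact hv (funext hcon)
      have hpos : 0 < dot v v :=
        Finset.sum_pos' (fun i _ => mul_self_nonneg _)
          ⟨i, Finset.mem_univ i, mul_self_pos.2 hi⟩
      have hneg : dot (-v) v = - dot v v := by
        simp [dot, Finset.sum_neg_distrib]
      rw [hneg]; linarith
  | succ n ih =>
    intro E v
    set d := E 0 with hd
    set E' : Fin n → ι → ℚ := fun j => E j.succ with hE'
    rcases ih E' v with ⟨c, hc, hv⟩ | ⟨y, hyE, hyv⟩
    · refine Or.inl ⟨Fin.cons 0 c, ?_, ?_⟩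
      · intro j
        refine Fin.cases ?_ ?_ j
        · simp
        · intro j'; simpa using hc j'
      · rw [Fin.sum_univ_succ]
        simpa using hv
    · by_cases hyd : 0 ≤ dot y d
      · refine Or.inr ⟨y, ?_, hyv⟩
        intro j
        refine Fin.cases ?_ ?_ j
        · exact hyd
        · intro j'; exact hyE j'
      · push_neg at hyd
        have hyd0 : dot y d ≠ 0 := ne_of_lt hyd
        set proj : (ι → ℚ) → (ι → ℚ) := fun w => w - (dot y w / dot y d) • d with hproj
        have hdotproj : ∀ (z w : ι → ℚ), dot z (proj w)
            = dot (z - (dot z d / dot y d) • y) w := by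
          intro z w
          rw [hproj]
          simp only []
          rw [dot_sub, dot_smul, dot_sub_left, dot_smul_left]
          rw [dot_comm z d, dot_comm z w]
          field_simp
        rcases ih (fun j => proj (E' j)) (proj v) with ⟨c, hc, hv⟩ | ⟨z, hzE, hzv⟩
        · -- reconstruct a conic combination for v
          set μ : ℚ := dot y v / dot y d - ∑ j, c j * (dot y (E' j) / dot y d) with hμ
          have hμ0 : 0 ≤ μ := by
            have h1 : 0 < dot y v / dot y d := div_pos_iff.2 (Or.inr ⟨hyv, hyd⟩)
            have h2 : ∀ j, c j * (dot y (E' j) / dot y d) ≤ 0 := by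
              intro j
              apply mul_nonpos_of_nonneg_of_nonpos (hc j)
              exact div_nonpos_of_nonneg_of_nonpos (hyE j) (le_of_lt hyd)
            have h3 : ∑ j, c j * (dot y (E' j) / dot y d) ≤ 0 :=
              Finset.sum_nonpos (fun j _ => h2 j)
            rw [hμ]; linarith
          refine Or.inl ⟨Fin.cons μ c, ?_, ?_⟩
          · intro j
            refine Fin.cases ?_ ?_ j
            · simpa using hμ0
            · intro j'; simpa using hc j'
          · rw [Fin.sum_univ_succ]
            simp only [Fin.cons_zero, Fin.cons_succ]
            have hvexp : v - (dot y v / dot y d) • d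
                = ∑ j, c j • E' j - (∑ j, c j * (dot y (E' j) / dot y d)) • d := by
              have := hv
              rw [hproj] at this
              simp only [] at this
              rw [this]
              rw [show (∑ x, c x • (E' x - (dot y (E' x) / dot y d) • d))
                  = ∑ x, (c x • E' x - (c x * (dot y (E' x) / dot y d)) • d) from
                Finset.sum_congr rfl (fun x _ => by rw [smul_sub, smul_smul])]
              rw [Finset.sum_sub_distrib, ← Finset.sum_smul]
            calc v = (dot y v / dot y d) • d
                  + (∑ j, c j • E' j - (∑ j, c j * (dot y (E' j) / dot y d)) • d) := by
                  rw [← hvexp]; abel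
              _ = μ • d + ∑ j, c j • E' j := by rw [hμ, sub_smul]; abel
        · refine Or.inr ⟨z - (dot z d / dot y d) • y, ?_, ?_⟩
          · intro j
            refine Fin.cases ?_ ?_ j
            · -- value at d is 0
              have : proj d = 0 := by
                rw [hproj]; simp [div_self hyd0]
              have h0 : dot z (proj d) = 0 := by rw [this]; simp [dot]
              rw [← hdotproj]
              rw [h0]
            · intro j'
              rw [← hdotproj]
              exact hzE j'
          · rw [← hdotproj]; exact hzv



lemma exists_nat_smul (M : ℕ) (c : Fin M → ℚ) (hc : ∀ j, 0 ≤ c j) :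
    ∃ (N : ℕ) (m : Fin M → ℕ), 0 < N ∧ ∀ j, (m j : ℚ) = (N : ℚ) * c j := by
  refine ⟨∏ j, (c j).den, fun j =>
    (∏ j' ∈ Finset.univ.erase j, (c j').den) * (c j).num.toNat, ?_, ?_⟩
  · exact Finset.prod_pos (fun j _ => (c j).pos)
  · intro j
    have hsplit : (∏ j', (c j').den) = (c j).den * ∏ j' ∈ Finset.univ.erase j, (c j').den :=
      (Finset.mul_prod_erase Finset.univ _ (Finset.mem_univ j)).symm
    have hnum : ((c j).num.toNat : ℚ) = ((c j).num : ℚ) := by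
      exact_mod_cast Int.toNat_of_nonneg (Rat.num_nonneg.2 (hc j))
    push_cast [hsplit, hnum]
    rw [mul_comm ((c j).den : ℚ) _, mul_assoc, mul_comm ((c j).den : ℚ) (c j),
      Rat.mul_den_eq_num]

lemma count_flatMap' {α β : Type*} [BEq β] (l : List α) (f : α → List β) (o : β) :
    ((l.flatMap f).count o) = (l.map (fun x => (f x).count o)).sum := by
  induction l with
  | nil => simp
  | cons x xs ih => simp [List.flatMap_cons, List.count_append, ih]



lemma cancel_apply {S O : Type*} [DecidableEq O] (C : Set (S → O)) (R : (S → O) → (S → O) → Prop)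
    (hC : ExtStatewiseCancel C R)
    (a b : S → O) (ha : a ∈ C) (hb : b ∈ C) (M : ℕ) (cd : Fin M → (S → O) × (S → O))
    (hcd : ∀ j, (cd j).1 ∈ C ∧ (cd j).2 ∈ C ∧ R (cd j).1 (cd j).2)
    (N : ℕ) (hN : 0 < N) (m : Fin M → ℕ)
    (hcount : ∀ s o,
        ((∑ j, m j * (if (cd j).1 s = o then 1 else 0)) + N * (if b s = o then 1 else 0) : ℕ)
      = (∑ j, m j * (if (cd j).2 s = o then 1 else 0)) + N * (if a s = o then 1 else 0)) :
    R a b := by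
  classical
  set part1 : List ((S → O) × (S → O)) :=
    (List.finRange M).flatMap (fun j => List.replicate (m j) (cd j)) with hpart1
  set L : List ((S → O) × (S → O)) := part1 ++ List.replicate N (b, a) with hL
  set k := ∑ j, m j with hk
  have hlen1 : part1.length = k := by
    rw [hpart1, List.length_flatMap, hk, Fin.sum_univ_def]
    simp [Function.comp_def]
  set n := k + N - 1 with hn
  have hn1 : n + 1 = k + N := by omega
  have hlen : L.length = n + 1 := by
    rw [hL, List.length_append, List.length_replicate, hlen1, hn1]
  set A : Fin (n+1) → S → O := fun i => (L.get (Fin.cast hlen.symm i)).1 with hA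
  set B : Fin (n+1) → S → O := fun i => (L.get (Fin.cast hlen.symm i)).2 with hB
  have hmem : ∀ t ∈ L, t.1 ∈ C ∧ t.2 ∈ C := by
    intro t ht
    rcases List.mem_append.1 ht with h1 | h2
    · rcases List.mem_flatMap.1 h1 with ⟨j, _, hrep⟩
      rw [List.eq_of_mem_replicate hrep]
      exact ⟨(hcd j).1, (hcd j).2.1⟩
    · rw [List.eq_of_mem_replicate h2]
      exact ⟨hb, ha⟩
  have hgetmem : ∀ i : Fin (n+1), L.get (Fin.cast hlen.symm i) ∈ L := by
    intro i
    simp only [List.get_eq_getElem]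
    exact List.getElem_mem _
  -- positional facts
  have hRpos : ∀ i : Fin (n+1), (i : ℕ) < k → R (A i) (B i) := by
    intro i hi
    have hi' : (i : ℕ) < part1.length := by rw [hlen1]; exact hi
    have hgetA : L.get (Fin.cast hlen.symm i) = part1[(i : ℕ)]'hi' := by
      simp only [hL, List.get_eq_getElem, Fin.coe_cast]
      exact List.getElem_append_left hi'
    have hmem1 : part1[(i : ℕ)]'hi' ∈ part1 := List.getElem_mem _
    rcases List.mem_flatMap.1 (show part1[(i : ℕ)]'hi'
        ∈ (List.finRange M).flatMap (fun j => List.replicate (m j) (cd j)) from hmem1)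
      with ⟨j, _, hrep⟩
    have heq : part1[(i : ℕ)]'hi' = cd j := List.eq_of_mem_replicate hrep
    have hcdj : L.get (Fin.cast hlen.symm i) = cd j := by rw [hgetA, heq]
    show R (L.get (Fin.cast hlen.symm i)).1 (L.get (Fin.cast hlen.symm i)).2
    rw [hcdj]
    exact (hcd j).2.2
  have hconstpos : ∀ i : Fin (n+1), k ≤ (i : ℕ) → L.get (Fin.cast hlen.symm i) = (b, a) := by
    intro i hi
    have h1 : part1.length ≤ (i : ℕ) := by rw [hlen1]; exact hi
    have h2 : (i : ℕ) < L.length := by rw [hlen]; exact i.isLt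
    simp only [hL, List.get_eq_getElem, Fin.coe_cast]
    rw [List.getElem_append_right h1]
    exact List.getElem_replicate ..
  have hklen : k ≤ n := by omega
  have hlastA : A (Fin.last n) = b := by
    rw [hA]; simp only []
    rw [hconstpos (Fin.last n) (by simp [Fin.last]; omega)]
  have hlastB : B (Fin.last n) = a := by
    rw [hB]; simp only []
    rw [hconstpos (Fin.last n) (by simp [Fin.last]; omega)]
  -- multiset condition
  have hofn : ∀ (f : (S → O) × (S → O) → O),
      (List.ofFn fun i : Fin (n+1) => f (L.get (Fin.cast hlen.symm i))) = L.map f := by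
    intro f
    apply List.ext_getElem
    · simp [hlen]
    · intro i h1 h2
      rw [List.getElem_ofFn, List.getElem_map]
      simp [List.get_eq_getElem]
  have hms : ∀ s : S, ((List.ofFn fun i => A i s : List O) : Multiset O)
      = ((List.ofFn fun i => B i s : List O) : Multiset O) := by
    intro s
    have e1 : (List.ofFn fun i => A i s) = L.map (fun t => t.1 s) := hofn (fun t => t.1 s)
    have e2 : (List.ofFn fun i => B i s) = L.map (fun t => t.2 s) := hofn (fun t => t.2 s)
    rw [e1, e2]
    refine Multiset.ext.2 (fun o => ?_)
    rw [Multiset.coe_count, Multiset.coe_count]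
    have key : ∀ (f : (S → O) × (S → O) → O),
        (L.map f).count o
        = (∑ j, m j * (if f (cd j) = o then 1 else 0)) + N * (if f (b, a) = o then 1 else 0) := by
      intro f
      rw [hL, List.map_append, List.count_append, hpart1, List.map_flatMap]
      congr 1
      · rw [count_flatMap', Fin.sum_univ_def]
        congr 1
        apply List.map_congr_left
        intro j _
        simp [List.map_replicate, List.count_replicate, beq_iff_eq, mul_ite]
      · rw [List.map_replicate, List.count_replicate]
        split_ifs with h <;> simp_all [beq_iff_eq]
    rw [key (fun t => t.1 s), key (fun t => t.2 s)]
    simpa using hcount s o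
  -- apply cancellation
  have hconc := hC n A B
    (fun i => (hmem _ (hgetmem i)).1)
    (fun i => (hmem _ (hgetmem i)).2)
    hms
    ⟨k, hklen, hRpos, by
      intro i hi
      constructor
      · rw [hlastA, hA]; simp only []; rw [hconstpos i hi]
      · rw [hlastB, hB]; simp only []; rw [hconstpos i hi]⟩
  rw [hlastA, hlastB] at hconc
  exact hconc



lemma cancel_of_rep {S O : Type*} [Fintype S] [Fintype O]
    (C : Set (S → O)) (R : (S → O) → (S → O) → Prop)
    {ns no : ℕ} (h : Fin (ns + 1) → S) (g : Fin (ns + 1) × O → Fin (no + 1))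
    (u : Fin (no + 1) → ℝ) (P : Set (Fin (ns + 1) → ℝ))
    (hrep : ∀ a ∈ C, ∀ b ∈ C,
      (R a b ↔ ∀ p ∈ P,
        ∑ s', p s' * u (g (s', a (h s'))) ≥ ∑ s', p s' * u (g (s', b (h s'))))) :
    ExtStatewiseCancel C R := by
  classical
  intro n a b ha hb hms hex
  obtain ⟨k, hk, hRk, hconst⟩ := hex
  rw [hrep _ (hb _) _ (ha _)]
  intro p hp
  set V : (S → O) → ℝ := fun f => ∑ s', p s' * u (g (s', f (h s'))) with hV
  show V (b (Fin.last n)) ≥ V (a (Fin.last n))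
  -- total sums are equal
  have hkey : ∀ (c : Fin (n+1) → S → O) (s' : Fin (ns+1)),
      ∑ i, u (g (s', c i (h s')))
      = (Multiset.map (fun o => u (g (s', o)))
          ((List.ofFn fun i => c i (h s') : List O) : Multiset O)).sum := by
    intro c s'
    rw [Multiset.map_coe, Multiset.sum_coe, List.map_ofFn, List.sum_ofFn]
    rfl
  have hsum : ∑ i, V (a i) = ∑ i, V (b i) := by
    simp only [hV]
    rw [Finset.sum_comm, Finset.sum_comm (s := Finset.univ (α := Fin (n+1)))]
    apply Finset.sum_congr rfl
    intro s' _
    rw [← Finset.mul_sum, ← Finset.mul_sum, hkey a s', hkey b s', hms (h s')]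
  -- split the sums
  have hsplit : ∀ (c : Fin (n+1) → S → O),
      ∑ i, V (c i) = (∑ i ∈ Finset.univ.filter (fun i : Fin (n+1) => (i : ℕ) < k), V (c i))
        + ∑ i ∈ Finset.univ.filter (fun i : Fin (n+1) => ¬ (i : ℕ) < k), V (c i) :=
    fun c => (Finset.sum_filter_add_sum_filter_not _ _ _).symm
  set T2 := Finset.univ.filter (fun i : Fin (n+1) => ¬ (i : ℕ) < k) with hT2
  have hconstA : ∀ i ∈ T2, V (a i) = V (a (Fin.last n)) := by
    intro i hi
    rw [(hconst i (by simpa using (Finset.mem_filter.1 hi).2)).1]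
  have hconstB : ∀ i ∈ T2, V (b i) = V (b (Fin.last n)) := by
    intro i hi
    rw [(hconst i (by simpa using (Finset.mem_filter.1 hi).2)).2]
  have hcardpos : 0 < T2.card := by
    refine Finset.card_pos.2 ⟨Fin.last n, ?_⟩
    simp [hT2, Fin.val_last]
    omega
  have hT2a : ∑ i ∈ T2, V (a i) = T2.card * V (a (Fin.last n)) := by
    rw [Finset.sum_congr rfl hconstA, Finset.sum_const, nsmul_eq_mul]
  have hT2b : ∑ i ∈ T2, V (b i) = T2.card * V (b (Fin.last n)) := by
    rw [Finset.sum_congr rfl hconstB, Finset.sum_const, nsmul_eq_mul]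
  have hT1 : ∑ i ∈ Finset.univ.filter (fun i : Fin (n+1) => (i : ℕ) < k), V (b i)
      ≤ ∑ i ∈ Finset.univ.filter (fun i : Fin (n+1) => (i : ℕ) < k), V (a i) := by
    apply Finset.sum_le_sum
    intro i hi
    have hRi := hRk i (by simpa using (Finset.mem_filter.1 hi).2)
    exact (hrep _ (ha i) _ (hb i)).1 hRi p hp
  have hc : (0 : ℝ) < T2.card := by exact_mod_cast hcardpos
  have := hsplit a
  have := hsplit b
  have hineq : (T2.card : ℝ) * V (a (Fin.last n)) ≤ (T2.card : ℝ) * V (b (Fin.last n)) := by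
    rw [hsplit a, hsplit b, hT2a, hT2b] at hsum
    linarith
  exact le_of_mul_le_mul_left hineq hc



variable {S O : Type*} [Fintype S] [Fintype O] [Nonempty S] [Nonempty O]

/-- indicator vector of an act -/
def chiQ [DecidableEq O] (f : S → O) : S × O → ℚ := fun x => if f x.1 = x.2 then 1 else 0

lemma sum_chiQ [DecidableEq O] (f : S → O) : ∑ x, chiQ f x = (Fintype.card S : ℚ) := by
  rw [Fintype.sum_prod_type]
  simp [chiQ, Finset.sum_ite_eq]

lemma rep_of_cancel (C : Set (S → O)) (R : (S → O) → (S → O) → Prop)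
    (hC : ExtStatewiseCancel C R) :
    ∃ (ns no : ℕ) (h : Fin (ns + 1) → S) (g : Fin (ns + 1) × O → Fin (no + 1))
      (u : Fin (no + 1) → ℝ) (P : Set (Fin (ns + 1) → ℝ)),
      P.Nonempty ∧
      (∀ p ∈ P, (∀ s', 0 ≤ p s') ∧ (∑ s', p s' = 1)) ∧
      (∀ a ∈ C, ∀ b ∈ C,
        (R a b ↔ ∀ p ∈ P,
          ∑ s', p s' * u (g (s', a (h s'))) ≥ ∑ s', p s' * u (g (s', b (h s'))))) := by
  classical
  set ns := Fintype.card (S × O) - 1 with hnsdef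
  have hns : ns + 1 = Fintype.card (S × O) := Nat.succ_pred_eq_of_pos Fintype.card_pos
  set e : Fin (ns + 1) ≃ S × O := (finCongr hns).trans (Fintype.equivFin (S × O)).symm with he
  set h : Fin (ns + 1) → S := fun s' => (e s').1 with hh
  set g : Fin (ns + 1) × O → Fin 2 := fun x => if x.2 = (e x.1).2 then 1 else 0 with hg
  set u : Fin 2 → ℝ := fun i => ((i : ℕ) : ℝ) with hu
  set V : (Fin (ns + 1) → ℝ) → (S → O) → ℝ :=
    fun p f => ∑ s', p s' * u (g (s', f (h s'))) with hV
  have hval : ∀ (f : S → O) (s' : Fin (ns + 1)),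
      u (g (s', f (h s'))) = ((chiQ f (e s') : ℚ) : ℝ) := by
    intro f s'
    rw [hu, hg, hh, chiQ]
    by_cases hc : f (e s').1 = (e s').2 <;> simp [hc, Fin.val_one]
  have htrans : ∀ (q : S × O → ℝ) (f : S → O),
      ∑ s', q (e s') * ((chiQ f (e s') : ℚ) : ℝ) = ∑ x, q x * ((chiQ f x : ℚ) : ℝ) :=
    fun q f => Equiv.sum_comp e (fun x => q x * ((chiQ f x : ℚ) : ℝ))
  have hVform : ∀ (q : S × O → ℝ) (f : S → O),
      V (fun s' => q (e s')) f = ∑ x, q x * ((chiQ f x : ℚ) : ℝ) := by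
    intro q f
    rw [hV]
    simp only []
    rw [← htrans q f]
    exact Finset.sum_congr rfl (fun s' _ => by rw [hval])
  have hsumchiR : ∀ f : S → O, ∑ x : S × O, ((chiQ f x : ℚ) : ℝ) = (Fintype.card S : ℝ) := by
    intro f
    have h1 : ((∑ x, chiQ f x : ℚ) : ℝ) = ((Fintype.card S : ℚ) : ℝ) :=
      congrArg (fun q : ℚ => (q : ℝ)) (sum_chiQ f)
    rw [Rat.cast_sum] at h1
    simpa using h1
  set P : Set (Fin (ns + 1) → ℝ) :=
    {p | (∀ s', 0 ≤ p s') ∧ (∑ s', p s' = 1) ∧ ∀ c ∈ C, ∀ d ∈ C, R c d → V p c ≥ V p d} with hP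
  refine ⟨ns, 1, h, g, u, P, ?_, fun p hp => ⟨hp.1, hp.2.1⟩, ?_⟩
  · -- nonempty: uniform distribution
    have hcardpos : (0 : ℝ) < Fintype.card (S × O) := by exact_mod_cast Fintype.card_pos
    set q : S × O → ℝ := fun _ => ((Fintype.card (S × O) : ℝ))⁻¹ with hq
    refine ⟨fun s' => q (e s'), ?_, ?_, ?_⟩
    · intro s'; exact inv_nonneg.2 (le_of_lt hcardpos)
    · rw [show (∑ s', q (e s')) = ∑ x, q x from Equiv.sum_comp e q]
      rw [hq]
      simp only [Finset.sum_const, Finset.card_univ, nsmul_eq_mul]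
      field_simp
    · intro c hcC d hdC hRcd
      have hcval : ∀ f : S → O, V (fun s' => q (e s')) f
          = ((Fintype.card (S × O) : ℝ))⁻¹ * (Fintype.card S : ℝ) := by
        intro f
        rw [hVform q f]
        rw [show (∑ x, q x * ((chiQ f x : ℚ) : ℝ))
            = ((Fintype.card (S × O) : ℝ))⁻¹ * ∑ x, ((chiQ f x : ℚ) : ℝ) from by
          rw [Finset.mul_sum]]
        rw [hsumchiR f]
      show V _ c ≥ V _ d
      rw [hcval c, hcval d]
  · intro a ha b hb
    constructor
    · intro hR p hp
      exact hp.2.2 a ha b hb hR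
    · intro hall
      set PF : Finset ((S → O) × (S → O)) :=
        Finset.univ.filter (fun t => t.1 ∈ C ∧ t.2 ∈ C ∧ R t.1 t.2) with hPF
      set PL := PF.toList with hPL
      set M := PL.length with hM
      set cd : Fin M → (S → O) × (S → O) := fun j => PL.get j with hcddef
      have hcd : ∀ j, (cd j).1 ∈ C ∧ (cd j).2 ∈ C ∧ R (cd j).1 (cd j).2 := by
        intro j
        have hmem : cd j ∈ PL := by
          simp only [hcddef, List.get_eq_getElem]
          exact List.getElem_mem _
        rw [hPL, Finset.mem_toList, hPF] at hmem
        simpa using (Finset.mem_filter.1 hmem).2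
      rcases farkas M (fun j => chiQ (cd j).1 - chiQ (cd j).2) (chiQ a - chiQ b)
        with ⟨c, hc0, hv⟩ | ⟨y, hyE, hyv⟩
      · obtain ⟨N, mm, hN, hmm⟩ := exists_nat_smul M c hc0
        apply cancel_apply C R hC a b ha hb M cd hcd N hN mm
        intro s o
        have hQ := congrFun hv (s, o)
        simp only [Pi.sub_apply, Finset.sum_apply, Pi.smul_apply, smul_eq_mul] at hQ
        have hQN : (N : ℚ) * (chiQ a (s, o) - chiQ b (s, o))
            = ∑ j, (mm j : ℚ) * (chiQ (cd j).1 (s, o) - chiQ (cd j).2 (s, o)) := by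
          rw [hQ, Finset.mul_sum]
          exact Finset.sum_congr rfl (fun j _ => by rw [hmm j]; ring)
        have hsplit2 : ∑ j, (mm j : ℚ) * (chiQ (cd j).1 (s, o) - chiQ (cd j).2 (s, o))
            = ∑ j, (mm j : ℚ) * chiQ (cd j).1 (s, o)
              - ∑ j, (mm j : ℚ) * chiQ (cd j).2 (s, o) := by
          rw [← Finset.sum_sub_distrib]
          exact Finset.sum_congr rfl (fun j _ => by ring)
        have hexp : (N : ℚ) * (chiQ a (s, o) - chiQ b (s, o))
            = (N : ℚ) * chiQ a (s, o) - (N : ℚ) * chiQ b (s, o) := by ring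
        rw [hexp, hsplit2] at hQN
        have hgoalQ : (∑ j, (mm j : ℚ) * chiQ (cd j).1 (s, o)) + (N : ℚ) * chiQ b (s, o)
            = (∑ j, (mm j : ℚ) * chiQ (cd j).2 (s, o)) + (N : ℚ) * chiQ a (s, o) := by
          linarith
        have hcast : ((∑ j, mm j * (if (cd j).1 s = o then 1 else 0)
              + N * (if b s = o then 1 else 0) : ℕ) : ℚ)
            = ((∑ j, mm j * (if (cd j).2 s = o then 1 else 0)
              + N * (if a s = o then 1 else 0) : ℕ) : ℚ) := by
          push_cast
          simpa [chiQ] using hgoalQ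
        exact_mod_cast hcast
      · exfalso
        set yr : S × O → ℝ := fun x => ((y x : ℚ) : ℝ) with hyr
        set Mb : ℝ := 1 + ∑ x, |yr x| with hMb
        set q : S × O → ℝ := fun x => yr x + Mb with hq
        have hqpos : ∀ x, 0 < q x := by
          intro x
          have h1 : |yr x| ≤ ∑ x', |yr x'| :=
            Finset.single_le_sum (f := fun x' => |yr x'|) (fun x' _ => abs_nonneg _)
              (Finset.mem_univ x)
          have h2 : -|yr x| ≤ yr x := neg_abs_le (yr x)
          show 0 < yr x + Mb
          rw [hMb]
          linarith
        set T : ℝ := ∑ x, q x with hT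
        have hTpos : 0 < T := Finset.sum_pos (fun x _ => hqpos x) Finset.univ_nonempty
        set p : Fin (ns + 1) → ℝ := fun s' => q (e s') / T with hpdef
        have hVp : ∀ f : S → O, V p f = (∑ x, q x * ((chiQ f x : ℚ) : ℝ)) / T := by
          intro f
          have h1 : V p f = V (fun s' => (fun x => q x / T) (e s')) f := rfl
          rw [h1, hVform (fun x => q x / T) f, Finset.sum_div]
          exact Finset.sum_congr rfl (fun x _ => by ring)
        have hdotcast : ∀ f : S → O, ((dot y (chiQ f) : ℚ) : ℝ)
            = ∑ x, yr x * ((chiQ f x : ℚ) : ℝ) := by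
          intro f
          rw [dot, Rat.cast_sum]
          exact Finset.sum_congr rfl (fun x _ => Rat.cast_mul _ _)
        have hqchi : ∀ f : S → O, ∑ x, q x * ((chiQ f x : ℚ) : ℝ)
            = ((dot y (chiQ f) : ℚ) : ℝ) + Mb * (Fintype.card S : ℝ) := by
          intro f
          rw [show (∑ x, q x * ((chiQ f x : ℚ) : ℝ))
              = ∑ x, (yr x * ((chiQ f x : ℚ) : ℝ) + Mb * ((chiQ f x : ℚ) : ℝ)) from
            Finset.sum_congr rfl (fun x _ => by rw [hq]; ring)]
          rw [Finset.sum_add_distrib, ← Finset.mul_sum, hsumchiR f, hdotcast f]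
        have hpP : p ∈ P := by
          refine ⟨?_, ?_, ?_⟩
          · intro s'; exact div_nonneg (le_of_lt (hqpos _)) (le_of_lt hTpos)
          · show (∑ s', q (e s') / T) = 1
            rw [← Finset.sum_div, Equiv.sum_comp e q, ← hT, div_self (ne_of_gt hTpos)]
          · intro c hcC d hdC hRcd
            have hmemPF : (c, d) ∈ PF := by
              rw [hPF]; simp [hcC, hdC, hRcd]
            have hmemPL : (c, d) ∈ PL := by rw [hPL, Finset.mem_toList]; exact hmemPF
            obtain ⟨j, hj⟩ := List.mem_iff_get.1 hmemPL
            have hge : (0 : ℚ) ≤ dot y (chiQ c - chiQ d) := by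
              have h0 := hyE j
              have hcdj : cd j = (c, d) := hj
              rw [hcdj] at h0
              exact h0
            rw [dot_sub] at hge
            have hgeR : ((dot y (chiQ d) : ℚ) : ℝ) ≤ ((dot y (chiQ c) : ℚ) : ℝ) := by
              have : dot y (chiQ d) ≤ dot y (chiQ c) := by linarith
              exact_mod_cast this
            show V p c ≥ V p d
            rw [hVp c, hVp d, hqchi c, hqchi d]
            rw [ge_iff_le]
            gcongr
        have hVab : V p a < V p b := by
          have hlt : dot y (chiQ a) < dot y (chiQ b) := by
            have h0 := hyv
            rw [dot_sub] at h0
            linarith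
          have hltR : ((dot y (chiQ a) : ℚ) : ℝ) < ((dot y (chiQ b) : ℚ) : ℝ) := by
            exact_mod_cast hlt
          rw [hVp a, hVp b, hqchi a, hqchi b]
          gcongr
        have h2 : V p a ≥ V p b := hall p hpP
        linarith



lemma singleton_of_rep {S O : Type*} [Fintype S] [Fintype O]
    (C : Set (S → O)) (R : (S → O) → (S → O) → Prop)
    {ns no : ℕ} (h : Fin (ns + 1) → S) (g : Fin (ns + 1) × O → Fin (no + 1))
    (u : Fin (no + 1) → ℝ) (P : Set (Fin (ns + 1) → ℝ)) (hPne : P.Nonempty)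
    (hPprob : ∀ p ∈ P, (∀ s', 0 ≤ p s') ∧ (∑ s', p s' = 1))
    (hrep : ∀ a ∈ C, ∀ b ∈ C,
      (R a b ↔ ∀ p ∈ P,
        ∑ s', p s' * u (g (s', a (h s'))) ≥ ∑ s', p s' * u (g (s', b (h s')))))
    (hcomp : ∀ a ∈ C, ∀ b ∈ C, R a b ∨ R b a) :
    ∃ p : Fin (ns + 1) → ℝ, (∀ s', 0 ≤ p s') ∧ (∑ s', p s' = 1) ∧
      ∀ a ∈ C, ∀ b ∈ C,
        (R a b ↔
          ∑ s', p s' * u (g (s', a (h s'))) ≥ ∑ s', p s' * u (g (s', b (h s')))) := by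
  classical
  set V : (Fin (ns + 1) → ℝ) → (S → O) → ℝ :=
    fun p f => ∑ s', p s' * u (g (s', f (h s'))) with hV
  set F : Finset ((S → O) × (S → O)) :=
    Finset.univ.filter (fun t => t.1 ∈ C ∧ t.2 ∈ C ∧ ¬ R t.1 t.2) with hF
  by_cases hFne : F.Nonempty
  · have hsep : ∀ t ∈ F, ∃ p ∈ P, V p t.1 < V p t.2 := by
      intro t ht
      rw [hF, Finset.mem_filter] at ht
      obtain ⟨-, ht1, ht2, htn⟩ := ht
      by_contra hcon
      push_neg at hcon
      exact htn ((hrep t.1 ht1 t.2 ht2).2 (fun p hp => hcon p hp))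
    set pc : ((S → O) × (S → O)) → (Fin (ns + 1) → ℝ) :=
      fun t => if ht : t ∈ F then (hsep t ht).choose else fun _ => 0 with hpc
    have hpcP : ∀ t ∈ F, pc t ∈ P := by
      intro t ht
      rw [hpc]; simp only [dif_pos ht]
      exact (hsep t ht).choose_spec.1
    have hpclt : ∀ t ∈ F, V (pc t) t.1 < V (pc t) t.2 := by
      intro t ht
      rw [hpc]; simp only [dif_pos ht]
      exact (hsep t ht).choose_spec.2
    have hcpos : (0 : ℝ) < F.card := by exact_mod_cast Finset.card_pos.2 hFne
    set p : Fin (ns + 1) → ℝ := fun s' => (∑ t ∈ F, pc t s') / F.card with hp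
    have hVlin : ∀ f : S → O, V p f = (∑ t ∈ F, V (pc t) f) / F.card := by
      intro f
      have h1 : V p f = ∑ s', (∑ t ∈ F, pc t s' * u (g (s', f (h s')))) / (F.card : ℝ) := by
        apply Finset.sum_congr rfl
        intro s' _
        rw [hp]
        simp only []
        rw [div_mul_eq_mul_div, Finset.sum_mul]
      rw [h1, ← Finset.sum_div, Finset.sum_comm]
    refine ⟨p, ?_, ?_, ?_⟩
    · intro s'
      rw [hp]
      exact div_nonneg
        (Finset.sum_nonneg fun t ht => (hPprob _ (hpcP t ht)).1 s') (le_of_lt hcpos)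
    · show ∑ s', (∑ t ∈ F, pc t s') / (F.card : ℝ) = 1
      rw [← Finset.sum_div, Finset.sum_comm]
      rw [Finset.sum_congr rfl (fun t ht => (hPprob _ (hpcP t ht)).2)]
      simp only [Finset.sum_const, nsmul_eq_mul, mul_one]
      exact div_self (ne_of_gt hcpos)
    · intro a ha b hb
      constructor
      · intro hR
        show V p a ≥ V p b
        rw [hVlin a, hVlin b, ge_iff_le]
        exact (div_le_div_iff_of_pos_right hcpos).2
          (Finset.sum_le_sum fun t ht => (hrep a ha b hb).1 hR (pc t) (hpcP t ht))
      · intro hge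
        by_contra hn
        have htF : (a, b) ∈ F := by
          rw [hF, Finset.mem_filter]; exact ⟨Finset.mem_univ _, ha, hb, hn⟩
        have hRba : R b a := (hcomp a ha b hb).resolve_left hn
        have hle : ∀ t ∈ F, V (pc t) a ≤ V (pc t) b :=
          fun t ht => (hrep b hb a ha).1 hRba (pc t) (hpcP t ht)
        have hstrict : ∑ t ∈ F, V (pc t) a < ∑ t ∈ F, V (pc t) b :=
          Finset.sum_lt_sum hle ⟨(a, b), htF, hpclt _ htF⟩
        have hlt : V p a < V p b := by
          rw [hVlin a, hVlin b]
          exact (div_lt_div_iff_of_pos_right hcpos).2 hstrict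
        have hge' : V p b ≤ V p a := hge
        linarith
  · obtain ⟨p0, hp0⟩ := hPne
    refine ⟨p0, (hPprob p0 hp0).1, (hPprob p0 hp0).2, ?_⟩
    intro a ha b hb
    constructor
    · intro hR
      exact (hrep a ha b hb).1 hR p0 hp0
    · intro _
      by_contra hn
      exact hFne ⟨(a, b), by rw [hF, Finset.mem_filter]; exact ⟨Finset.mem_univ _, ha, hb, hn⟩⟩


end SEUAux

/-- A relation on a set of Savage acts satisfies extended statewise cancellation iff it
has a constructive SEU representation over some finite nonempty subjective state space
`Fin (ns+1)` and outcome space `Fin (no+1)`, with a single utility function and a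
nonempty set of probability distributions; if the relation is moreover complete, the set
of probabilities can be chosen to be a singleton. -/
theorem extStatewiseCancel_iff_constructiveSEURep
    {S O : Type*} [Fintype S] [Fintype O] [Nonempty S] [Nonempty O]
    (C : Set (S → O)) (R : (S → O) → (S → O) → Prop) :
    (ExtStatewiseCancel C R ↔
      ∃ (ns no : ℕ) (h : Fin (ns + 1) → S) (g : Fin (ns + 1) × O → Fin (no + 1))
        (u : Fin (no + 1) → ℝ) (P : Set (Fin (ns + 1) → ℝ)),
        P.Nonempty ∧
        (∀ p ∈ P, (∀ s', 0 ≤ p s') ∧ (∑ s', p s' = 1)) ∧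
        (∀ a ∈ C, ∀ b ∈ C,
          (R a b ↔ ∀ p ∈ P,
            ∑ s', p s' * u (g (s', a (h s'))) ≥ ∑ s', p s' * u (g (s', b (h s')))))) ∧
    ((ExtStatewiseCancel C R ∧ (∀ a ∈ C, ∀ b ∈ C, R a b ∨ R b a)) →
      ∃ (ns no : ℕ) (h : Fin (ns + 1) → S) (g : Fin (ns + 1) × O → Fin (no + 1))
        (u : Fin (no + 1) → ℝ) (p : Fin (ns + 1) → ℝ),
        (∀ s', 0 ≤ p s') ∧ (∑ s', p s' = 1) ∧
        (∀ a ∈ C, ∀ b ∈ C,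
          (R a b ↔
            ∑ s', p s' * u (g (s', a (h s'))) ≥ ∑ s', p s' * u (g (s', b (h s')))))) := by
  constructor
  · constructor
    · exact fun hC => SEUAux.rep_of_cancel C R hC
    · rintro ⟨ns, no, h, g, u, P, hPne, hPprob, hrep⟩
      exact SEUAux.cancel_of_rep C R h g u P hrep
  · rintro ⟨hC, hcomp⟩
    obtain ⟨ns, no, h, g, u, P, hPne, hPprob, hrep⟩ := SEUAux.rep_of_cancel C R hC
    obtain ⟨p, h1, h2, h3⟩ := SEUAux.singleton_of_rep C R h g u P hPne hPprob hrep hcomp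
    exact ⟨ns, no, h, g, u, p, h1, h2, h3⟩
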